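/- Let r: ℝ² → ℝ be differentiable at (ρ,p) with r(ρ,p) > 0, let ρ + p > 0, and let χ ≠ 0 be a real number satisfying the local thermal equilibrium relation r(ρ,p) = (ρ+p)(∂_ρ r + χ ∂_p r) at (ρ,p). Define τ(ρ,p) = (ρ+p)/r(ρ,p)². Then ∂_p τ + (1/χ) ∂_ρ τ = (χ − 1)/(r² χ) at (ρ,p). -/

import Mathlib

set_option maxHeartbeats 1000000 in
private lemma stmt_4_alg (s a b χ : ℝ) (hs : 0 < s) (hu : 0 < a + χ * b) (hχ : χ ≠ 0) :
    s * (-(((s * (a + χ * b)) ^ 2) ^ 2)⁻¹ * (2 * (s * (a + χ * b)) * b)) +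
        ((s * (a + χ * b)) ^ 2)⁻¹ * (0 + 1) +
      1 / χ *
        (s * (-(((s * (a + χ * b)) ^ 2) ^ 2)⁻¹ * (2 * (s * (a + χ * b)) * a)) +
          ((s * (a + χ * b)) ^ 2)⁻¹ * (1 + 0)) =
    (χ - 1) / ((s * (a + χ * b)) ^ 2 * χ) := by
  field_simp
  ring

theorem stmt_4 (r : ℝ × ℝ → ℝ) (ρ p χ : ℝ) (Dr : ℝ × ℝ →L[ℝ] ℝ)
    (hr : HasFDerivAt r Dr (ρ, p)) (hrpos : 0 < r (ρ, p)) (hsum : 0 < ρ + p) (hχ : χ ≠ 0)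
    (hlte : r (ρ, p) = (ρ + p) * (Dr (1, 0) + χ * Dr (0, 1))) :
    fderiv ℝ (fun q : ℝ × ℝ => (q.1 + q.2) / (r q) ^ 2) (ρ, p) (0, 1) +
        (1 / χ) * fderiv ℝ (fun q : ℝ × ℝ => (q.1 + q.2) / (r q) ^ 2) (ρ, p) (1, 0) =
      (χ - 1) / ((r (ρ, p)) ^ 2 * χ) := by
  have hf : HasFDerivAt (fun q : ℝ × ℝ => q.1 + q.2)
      ((ContinuousLinearMap.fst ℝ ℝ ℝ) + (ContinuousLinearMap.snd ℝ ℝ ℝ)) (ρ, p) :=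
    hasFDerivAt_fst.add hasFDerivAt_snd
  have hg : HasFDerivAt (fun q : ℝ × ℝ => (r q) ^ 2)
      ((2 * r (ρ, p)) • Dr) (ρ, p) := by
    have := hr.mul hr
    simpa [pow_two, two_mul, add_smul, Pi.mul_def] using this
  have hne : (r (ρ, p)) ^ 2 ≠ 0 := pow_ne_zero 2 hrpos.ne'
  have hinv := (hasDerivAt_inv hne).comp_hasFDerivAt (ρ, p) hg
  have hd := hf.mul hinv
  simp only [Function.comp_def, Pi.mul_def] at hd
  have heq : (fun q : ℝ × ℝ => (q.1 + q.2) / (r q) ^ 2)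
      = fun q : ℝ × ℝ => (q.1 + q.2) * ((r q) ^ 2)⁻¹ := by
    funext q; rw [div_eq_mul_inv]
  have hu : 0 < Dr (1, 0) + χ * Dr (0, 1) := by
    have h := hrpos
    rw [hlte] at h
    rcases mul_pos_iff.mp h with ⟨_, h2⟩ | ⟨h1, _⟩
    · exact h2
    · linarith
  rw [heq, hd.fderiv]
  simp only [ContinuousLinearMap.add_apply, ContinuousLinearMap.smul_apply,
    ContinuousLinearMap.coe_fst', ContinuousLinearMap.coe_snd', smul_eq_mul]
  rw [hlte]
  exact stmt_4_alg (ρ + p) (Dr (1, 0)) (Dr (0, 1)) χ hsum hu hχ
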